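/- Let (t_n)_{n≥1} be a strictly decreasing sequence of positive reals with t_n → 0 such that (t_n − t_{n+1})_{n≥1} is decreasing, let α ∈ (0,1), and suppose S := ∑_{k=1}^∞ (t_k − t_{k+1})^α < ∞. Then for every δ > 0 one has δ^{α/(1−α)} · #{n : t_n ≥ δ} ≤ S^{1/(1−α)}; in particular (t_n) ∈ ℓ^{α/(1−α),∞}(ℕ). -/

import Mathlib

open MeasureTheory

/-- A sequence belongs to `ℓ^{r,∞}(ℕ)` if `#{n : |t_n| ≥ δ} ≤ N δ^{-r}` for all `δ > 0`. -/
def memLorentz (r : ℝ) (t : ℕ → ℝ) : Prop :=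
  ∃ N : ℝ, 0 < N ∧ ∀ δ : ℝ, 0 < δ →
    Set.encard {n : ℕ | δ ≤ |t n|} ≤ ENNReal.ofReal (N * δ ^ (-r))

theorem stmt8 (t : ℕ → ℝ) (hpos : ∀ n, 0 < t n) (hanti : StrictAnti t)
    (hlim : Filter.Tendsto t Filter.atTop (nhds 0))
    (hdiff : Antitone fun n : ℕ => t n - t (n + 1))
    (α : ℝ) (hα : α ∈ Set.Ioo (0 : ℝ) 1)
    (hS : Summable fun k : ℕ => (t k - t (k + 1)) ^ α) :
    (∀ δ : ℝ, 0 < δ →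
        ENNReal.ofReal (δ ^ (α / (1 - α))) * Set.encard {n : ℕ | δ ≤ t n} ≤
          ENNReal.ofReal ((∑' k : ℕ, (t k - t (k + 1)) ^ α) ^ (1 / (1 - α)))) ∧
      memLorentz (α / (1 - α)) t := by
  obtain ⟨hα0, hα1⟩ := hα
  have h1α : (0:ℝ) < 1 - α := by linarith
  set d : ℕ → ℝ := fun n => t n - t (n + 1) with hd_def
  have hd : ∀ n, 0 < d n := fun n => sub_pos.2 (hanti (lt_add_one n))
  set S : ℝ := ∑' k : ℕ, (t k - t (k + 1)) ^ α with hS_def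
  have hSpos : 0 < S :=
    Summable.tsum_pos hS (fun i => Real.rpow_nonneg (hd i).le α) 0
      (Real.rpow_pos_of_pos (hd 0) α)
  set r : ℝ := α / (1 - α) with hr_def
  have hr0 : 0 < r := div_pos hα0 h1α
  -- t n equals the tail sum of d
  have hsum : ∀ n, HasSum (fun k => d (n + k)) (t n) := by
    intro n
    rw [hasSum_iff_tendsto_nat_of_nonneg (fun k => (hd (n + k)).le)]
    have heq : ∀ N : ℕ, ∑ k ∈ Finset.range N, d (n + k) = t n - t (n + N) := by
      intro N
      exact Finset.sum_range_sub' (fun k => t (n + k)) N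
    simp only [heq]
    have htail : Filter.Tendsto (fun N : ℕ => t (n + N)) Filter.atTop (nhds 0) := by
      apply hlim.comp
      exact Filter.tendsto_atTop_mono (fun N => Nat.le_add_left N n) Filter.tendsto_id
    simpa using (tendsto_const_nhds.sub htail)
  -- summability of shifted α-powers
  have hshift : ∀ n, Summable (fun k => d (n + k) ^ α) := by
    intro n
    have := hS.comp_injective (add_right_injective n)
    exact this
  have htail_le : ∀ n, (∑' k, d (n + k) ^ α) ≤ S := by
    intro n
    refine Summable.tsum_le_tsum_of_inj (fun k => n + k) (add_right_injective n)
      (fun c _ => Real.rpow_nonneg (hd c).le α) (fun k => le_rfl) (hshift n) hS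
  -- Step B : t n ≤ d n ^ (1-α) * S
  have hB : ∀ n, t n ≤ d n ^ (1 - α) * S := by
    intro n
    have hle : ∀ k, d (n + k) ≤ d (n + k) ^ α * d n ^ (1 - α) := by
      intro k
      have hdk : d (n + k) ≤ d n := hdiff (Nat.le_add_right n k)
      calc d (n + k) = d (n + k) ^ α * d (n + k) ^ (1 - α) := by
            rw [← Real.rpow_add (hd (n + k))]; simp
        _ ≤ d (n + k) ^ α * d n ^ (1 - α) := by
            apply mul_le_mul_of_nonneg_left _ (Real.rpow_nonneg (hd (n + k)).le α)
            exact Real.rpow_le_rpow (hd (n + k)).le hdk h1α.le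
    have h1 : t n ≤ ∑' k, d (n + k) ^ α * d n ^ (1 - α) := by
      rw [← (hsum n).tsum_eq]
      exact Summable.tsum_le_tsum hle (hsum n).summable ((hshift n).mul_right _)
    rw [tsum_mul_right] at h1
    calc t n ≤ (∑' k, d (n + k) ^ α) * d n ^ (1 - α) := h1
      _ ≤ S * d n ^ (1 - α) := by
          apply mul_le_mul_of_nonneg_right (htail_le n) (Real.rpow_nonneg (hd n).le _)
      _ = d n ^ (1 - α) * S := mul_comm _ _
  -- Step C : (n+1) * d n ^ α ≤ S
  have hC : ∀ n : ℕ, (n + 1 : ℝ) * d n ^ α ≤ S := by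
    intro n
    have h1 : ∀ k ∈ Finset.range (n + 1), d n ^ α ≤ d k ^ α := by
      intro k hk
      exact Real.rpow_le_rpow (hd n).le (hdiff (by simpa using Nat.lt_succ_iff.mp (Finset.mem_range.mp hk))) hα0.le
    calc (n + 1 : ℝ) * d n ^ α = ∑ k ∈ Finset.range (n + 1), d n ^ α := by
          simp [mul_comm]
      _ ≤ ∑ k ∈ Finset.range (n + 1), d k ^ α := Finset.sum_le_sum h1
      _ ≤ S := Summable.sum_le_tsum _ (fun k _ => Real.rpow_nonneg (hd k).le α) hS
  -- Step D : core inequality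
  have hD : ∀ δ : ℝ, 0 < δ → ∀ n : ℕ, δ ≤ t n →
      (n + 1 : ℝ) * δ ^ r ≤ S ^ (1 / (1 - α)) := by
    intro δ hδ n hn
    have hdn := hd n
    have h1 : δ ^ r ≤ (d n ^ (1 - α) * S) ^ r :=
      Real.rpow_le_rpow hδ.le (hn.trans (hB n)) hr0.le
    have h2 : (d n ^ (1 - α) * S) ^ r = d n ^ α * S ^ r := by
      rw [Real.mul_rpow (Real.rpow_nonneg hdn.le _) hSpos.le, ← Real.rpow_mul hdn.le,
        show (1 - α) * r = α by rw [hr_def]; field_simp]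
    have h3 : (n + 1 : ℝ) * δ ^ r ≤ ((n + 1 : ℝ) * d n ^ α) * S ^ r := by
      rw [h2] at h1
      calc (n + 1 : ℝ) * δ ^ r ≤ (n + 1 : ℝ) * (d n ^ α * S ^ r) :=
            mul_le_mul_of_nonneg_left h1 (by positivity)
        _ = ((n + 1 : ℝ) * d n ^ α) * S ^ r := by ring
    calc (n + 1 : ℝ) * δ ^ r ≤ ((n + 1 : ℝ) * d n ^ α) * S ^ r := h3
      _ ≤ S * S ^ r := mul_le_mul_of_nonneg_right (hC n) (Real.rpow_nonneg hSpos.le r)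
      _ = S ^ (1 / (1 - α)) := by
          rw [show (1:ℝ) / (1 - α) = 1 + r by rw [hr_def]; field_simp; ring,
            Real.rpow_one_add' hSpos.le (ne_of_gt (by linarith : (0:ℝ) < 1 + r))]
  -- main bound
  have main : ∀ δ : ℝ, 0 < δ →
      ENNReal.ofReal (δ ^ r) * Set.encard {n : ℕ | δ ≤ t n} ≤
        ENNReal.ofReal (S ^ (1 / (1 - α))) := by
    intro δ hδ
    set A : Set ℕ := {n : ℕ | δ ≤ t n} with hA_def
    have hAfin : A.Finite := by
      obtain ⟨N, hN⟩ := (Filter.tendsto_atTop'.mp hlim (Set.Iio δ) (Iio_mem_nhds hδ))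
      apply Set.Finite.subset (Set.finite_Iio N)
      intro k hk
      have hk' : δ ≤ t k := hk
      simp only [Set.mem_Iio]
      by_contra h
      push_neg at h
      have h2 := hN k h
      rw [Set.mem_Iio] at h2
      linarith
    rcases Set.eq_empty_or_nonempty A with hA | hA
    · simp [hA]
    · have hfne : hAfin.toFinset.Nonempty := by
        rwa [Set.Finite.toFinset_nonempty]
      set n := hAfin.toFinset.max' hfne with hn_def
      have hnA : n ∈ A := by
        have := hAfin.toFinset.max'_mem hfne
        rwa [Set.Finite.mem_toFinset] at this
      have hcard : hAfin.toFinset.card ≤ n + 1 := by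
        have hsub : hAfin.toFinset ⊆ Finset.Iic n := by
          intro k hk
          exact Finset.mem_Iic.mpr (hAfin.toFinset.le_max' k hk)
        calc hAfin.toFinset.card ≤ (Finset.Iic n).card := Finset.card_le_card hsub
          _ = n + 1 := by simp
      rw [hAfin.encard_eq_coe_toFinset_card]
      have key := hD δ hδ n hnA
      have h4 : (hAfin.toFinset.card : ℝ) * δ ^ r ≤ S ^ (1 / (1 - α)) := by
        refine le_trans ?_ key
        apply mul_le_mul_of_nonneg_right _ (Real.rpow_nonneg hδ.le r)
        exact_mod_cast hcard
      calc ENNReal.ofReal (δ ^ r) * (hAfin.toFinset.card : ℕ∞) 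
          = ENNReal.ofReal (δ ^ r) * ENNReal.ofReal (hAfin.toFinset.card : ℝ) := by
            rw [ENNReal.ofReal_natCast]
            norm_cast
        _ = ENNReal.ofReal ((hAfin.toFinset.card : ℝ) * δ ^ r) := by
            rw [← ENNReal.ofReal_mul (Real.rpow_nonneg hδ.le r), mul_comm]
        _ ≤ ENNReal.ofReal (S ^ (1 / (1 - α))) := ENNReal.ofReal_le_ofReal h4
  refine ⟨main, ?_⟩
  refine ⟨S ^ (1 / (1 - α)), Real.rpow_pos_of_pos hSpos _, ?_⟩
  intro δ hδ
  have habs : {n : ℕ | δ ≤ |t n|} = {n : ℕ | δ ≤ t n} := by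
    ext n; simp [abs_of_pos (hpos n)]
  rw [habs]
  have h1 := main δ hδ
  have hδr : 0 < δ ^ r := Real.rpow_pos_of_pos hδ r
  rw [Real.rpow_neg hδ.le, ← div_eq_mul_inv, ENNReal.ofReal_div_of_pos hδr]
  rw [ENNReal.le_div_iff_mul_le (Or.inl (by simp [ENNReal.ofReal_pos.mpr hδr, ne_of_gt]))
    (Or.inl ENNReal.ofReal_ne_top)]
  rw [mul_comm]
  exact h1
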